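/- For γ ∈ (0,1) and β ≥ 1, the ratio of Avalanche's expected confirmation delay to Glacier's expected confirmation delay, namely [(1-(1-γ)^β)/(γ(1-γ)^β)] / [β/(1-γ)], tends to +∞ as β → ∞. -/

import Mathlib

/-- The ratio of Avalanche's expected confirmation delay (1-(1-γ)^β)/(γ(1-γ)^β) to
Glacier's expected confirmation delay β/(1-γ) tends to +∞ as β → ∞. -/
theorem stmt_19 (γ : ℝ) (hγ : γ ∈ Set.Ioo (0 : ℝ) 1) :
    Filter.Tendsto
      (fun β : ℕ => ((1 - (1 - γ) ^ β) / (γ * (1 - γ) ^ β)) / ((β : ℝ) / (1 - γ)))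
      Filter.atTop Filter.atTop := by
  obtain ⟨hγ0, hγ1⟩ := hγ
  set q : ℝ := 1 - γ with hq
  have hq0 : 0 < q := by simp [hq]; linarith
  have hq1 : q < 1 := by simp [hq]; linarith
  -- β * q^β → 0
  have h0 : Filter.Tendsto (fun β : ℕ => (β : ℝ) * q ^ β) Filter.atTop (nhds 0) :=
    tendsto_self_mul_const_pow_of_lt_one hq0.le hq1
  have hpos : ∀ᶠ β : ℕ in Filter.atTop, 0 < (β : ℝ) * q ^ β := by
    filter_upwards [Filter.eventually_ge_atTop 1] with β hβ
    have : (0:ℝ) < (β : ℝ) := by exact_mod_cast hβ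
    positivity
  have hinv : Filter.Tendsto (fun β : ℕ => ((β : ℝ) * q ^ β)⁻¹) Filter.atTop Filter.atTop := by
    refine Filter.Tendsto.inv_tendsto_nhdsGT_zero ?_
    exact tendsto_nhdsWithin_of_tendsto_nhds_of_eventually_within _ h0 hpos
  have hmul : Filter.Tendsto (fun β : ℕ => (q / γ * (1 - q ^ β))) Filter.atTop
      (nhds (q / γ * (1 - 0))) :=
    Filter.Tendsto.const_mul _ (tendsto_const_nhds.sub
      (tendsto_pow_atTop_nhds_zero_of_lt_one hq0.le hq1))
  have hc : 0 < q / γ * (1 - 0) := by positivity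
  have := Filter.Tendsto.pos_mul_atTop hc hmul hinv
  refine this.congr' ?_
  filter_upwards [Filter.eventually_ge_atTop 1] with β hβ
  have hβ0 : (0:ℝ) < (β : ℝ) := by exact_mod_cast hβ
  have hqb : (0:ℝ) < q ^ β := pow_pos hq0 β
  field_simp
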